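/- Let c_0 > 0 and m_0 in N, and let f : D cap [0,1] -> R be a function on the dyadic rationals in [0,1] such that for every m >= m_0 and every j in {0, 1, ..., 2^m - 1}, |f((j+1) 2^{-m}) - f(j 2^{-m})| <= c_0 2^{-2m/3} (log 2^m)^{1/3}. Then there is a constant C (depending only on c_0) such that for all dyadic s, t in [0,1] with 0 < t - s <= 2^{-m_0}, |f(t) - f(s)| <= C (t-s)^{2/3} (log (t-s)^{-1})^{1/3}. -/

import Mathlib

open Finset

lemma chain_aux (f : ℝ → ℝ) (g : ℕ → ℝ) (hg : ∀ k, 0 ≤ g k) (m₀ m : ℕ) (hm : m₀ ≤ m)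
    (hf : ∀ k, m₀ ≤ k → ∀ j : ℕ, j < 2 ^ k →
      |f (((j:ℝ)+1)/2^k) - f ((j:ℝ)/2^k)| ≤ g k) :
    ∀ d a b : ℕ, a ≤ b → b ≤ 2^(m+d) → b ≤ a + 2^d →
      |f ((b:ℝ)/2^(m+d)) - f ((a:ℝ)/2^(m+d))| ≤ ∑ k ∈ Icc m (m+d), 2 * g k := by
  intro d
  induction d with
  | zero =>
    intro a b hab hb2 hba
    simp only [Nat.add_zero, pow_zero] at *
    rw [Finset.Icc_self, Finset.sum_singleton]
    rcases (by omega : b = a ∨ b = a + 1) with h | h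
    · subst h; simp [hg m]
    · subst h
      have := hf m hm a (by omega)
      push_cast at this ⊢
      nlinarith [hg m]
  | succ d ih =>
    intro a b hab hb2 hba
    rcases eq_or_lt_of_le hab with h | hlt
    · subst h
      simp only [sub_self, abs_zero]
      exact Finset.sum_nonneg (fun k _ => by nlinarith [hg k])
    set N := m + (d+1) with hN
    have hadd : m + (d+1) = (m+d)+1 := by omega
    have hp2 : (2:ℕ)^N = 2 * 2^(m+d) := by rw [hN, hadd, pow_succ]; ring
    have hp2' : (2:ℕ)^(d+1) = 2 * 2^d := by rw [pow_succ]; ring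
    set a' := (a+1)/2 with ha'
    set b' := b/2 with hb'
    have h1 : a' ≤ b' := by omega
    have h2 : b' ≤ 2^(m+d) := by omega
    have h3 : b' ≤ a' + 2^d := by omega
    have key : ∀ x : ℕ, ((2*x : ℕ) : ℝ)/2^N = ((x:ℕ):ℝ)/2^(m+d) := by
      intro x
      rw [hN, hadd]
      push_cast
      rw [pow_succ]
      ring
    have bound1 : |f ((b:ℝ)/2^N) - f (((2*b' : ℕ):ℝ)/2^N)| ≤ g N := by
      rcases (by omega : b = 2*b' ∨ b = 2*b' + 1) with h | h
      · rw [← h]; simp [hg N]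
      · have hj : 2*b' < 2^N := by omega
        have := hf N (by omega) (2*b') hj
        rw [h]; push_cast at this ⊢; convert this using 3 <;> ring
    have bound3 : |f (((2*a' : ℕ):ℝ)/2^N) - f ((a:ℝ)/2^N)| ≤ g N := by
      rcases (by omega : 2*a' = a ∨ 2*a' = a + 1) with h | h
      · rw [h]; simp [hg N]
      · have hj : a < 2^N := by omega
        have := hf N (by omega) a hj
        rw [h]; push_cast at this ⊢; convert this using 3 <;> ring
    have bound2 := ih a' b' h1 h2 h3
    rw [← key a', ← key b'] at bound2
    have tri : |f ((b:ℝ)/2^N) - f ((a:ℝ)/2^N)| ≤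
        |f ((b:ℝ)/2^N) - f (((2*b' : ℕ):ℝ)/2^N)| +
        |f (((2*b' : ℕ):ℝ)/2^N) - f (((2*a' : ℕ):ℝ)/2^N)| +
        |f (((2*a' : ℕ):ℝ)/2^N) - f ((a:ℝ)/2^N)| := by
      have := abs_sub_le (f ((b:ℝ)/2^N)) (f (((2*b' : ℕ):ℝ)/2^N)) (f ((a:ℝ)/2^N))
      have h2' := abs_sub_le (f (((2*b' : ℕ):ℝ)/2^N)) (f (((2*a' : ℕ):ℝ)/2^N)) (f ((a:ℝ)/2^N))
      linarith
    have sumeq : ∑ k ∈ Icc m (m+(d+1)), 2 * g k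
        = (∑ k ∈ Icc m (m+d), 2 * g k) + 2 * g N := by
      rw [hadd]
      exact Finset.sum_Icc_succ_top (by omega) _
    rw [sumeq]
    linarith

lemma hterm (m j : ℕ) (hm : 1 ≤ m) :
    ((m+j:ℕ):ℝ) ^ ((1:ℝ)/3) * (2:ℝ) ^ (-(2*((m+j:ℕ):ℝ))/3) ≤
      ((m:ℝ) ^ ((1:ℝ)/3) * (2:ℝ) ^ (-(2*(m:ℝ))/3)) * ((2:ℝ) ^ (-(1:ℝ)/3)) ^ j := by
  have hnat : (m + j : ℕ) ≤ m * 2^j := by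
    have := Nat.lt_two_pow_self (n := j)
    calc m + j ≤ m + m * j := by nlinarith
    _ ≤ m * 2^j := by nlinarith [Nat.lt_two_pow_self (n := j)]
  have hr : ((m+j:ℕ):ℝ) ≤ (m:ℝ) * 2^(j:ℕ) := by exact_mod_cast hnat
  have h13 : ((m+j:ℕ):ℝ) ^ ((1:ℝ)/3) ≤ ((m:ℝ) * 2^(j:ℕ)) ^ ((1:ℝ)/3) :=
    Real.rpow_le_rpow (by positivity) hr (by norm_num)
  have hsplit : ((m:ℝ) * 2^(j:ℕ)) ^ ((1:ℝ)/3)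
      = (m:ℝ) ^ ((1:ℝ)/3) * (2:ℝ) ^ ((j:ℝ)/3) := by
    rw [Real.mul_rpow (by positivity) (by positivity)]
    congr 1
    rw [← Real.rpow_natCast 2 j, ← Real.rpow_mul (by norm_num)]
    ring_nf
  have hpow : ((2:ℝ) ^ (-(1:ℝ)/3)) ^ j = (2:ℝ) ^ (-(j:ℝ)/3) := by
    rw [← Real.rpow_natCast ((2:ℝ) ^ (-(1:ℝ)/3)) j, ← Real.rpow_mul (by norm_num)]
    ring_nf
  rw [hpow]
  have e1 : (2:ℝ) ^ ((j:ℝ)/3) * (2:ℝ) ^ (-(2*((m+j:ℕ):ℝ))/3)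
      = (2:ℝ) ^ (-(2*(m:ℝ))/3) * (2:ℝ) ^ (-(j:ℝ)/3) := by
    rw [← Real.rpow_add (by norm_num), ← Real.rpow_add (by norm_num)]
    congr 1
    push_cast
    ring
  calc ((m+j:ℕ):ℝ) ^ ((1:ℝ)/3) * (2:ℝ) ^ (-(2*((m+j:ℕ):ℝ))/3)
      ≤ ((m:ℝ) ^ ((1:ℝ)/3) * (2:ℝ) ^ ((j:ℝ)/3)) * (2:ℝ) ^ (-(2*((m+j:ℕ):ℝ))/3) := by
        rw [← hsplit]; exact mul_le_mul_of_nonneg_right h13 (by positivity)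
    _ = (m:ℝ) ^ ((1:ℝ)/3) * ((2:ℝ) ^ ((j:ℝ)/3) * (2:ℝ) ^ (-(2*((m+j:ℕ):ℝ))/3)) := by ring
    _ = (m:ℝ) ^ ((1:ℝ)/3) * ((2:ℝ) ^ (-(2*(m:ℝ))/3) * (2:ℝ) ^ (-(j:ℝ)/3)) := by rw [e1]
    _ = ((m:ℝ) ^ ((1:ℝ)/3) * (2:ℝ) ^ (-(2*(m:ℝ))/3)) * (2:ℝ) ^ (-(j:ℝ)/3) := by ring

lemma hsum (m d : ℕ) (hm : 1 ≤ m) :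
    ∑ k ∈ Icc m (m+d), ((k:ℝ) ^ ((1:ℝ)/3) * (2:ℝ) ^ (-(2*(k:ℝ))/3)) ≤
      5 * ((m:ℝ) ^ ((1:ℝ)/3) * (2:ℝ) ^ (-(2*(m:ℝ))/3)) := by
  set H := (m:ℝ) ^ ((1:ℝ)/3) * (2:ℝ) ^ (-(2*(m:ℝ))/3) with hH
  have hH0 : 0 ≤ H := by positivity
  set r := (2:ℝ) ^ (-(1:ℝ)/3) with hr
  have hr0 : 0 ≤ r := by positivity
  have hr1 : r < 1 := by
    rw [hr]
    apply Real.rpow_lt_one_of_one_lt_of_neg (by norm_num) (by norm_num)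
  have hr45 : r ≤ 4/5 := by
    have h3 : r ^ (3:ℕ) = 1/2 := by
      rw [hr, ← Real.rpow_natCast ((2:ℝ) ^ (-(1:ℝ)/3)) 3, ← Real.rpow_mul (by norm_num)]
      norm_num
    nlinarith [sq_nonneg (r - 4/5), sq_nonneg r, hr0]
  have step1 : ∑ k ∈ Icc m (m+d), ((k:ℝ) ^ ((1:ℝ)/3) * (2:ℝ) ^ (-(2*(k:ℝ))/3))
      = ∑ j ∈ range (d+1), (((m+j:ℕ):ℝ) ^ ((1:ℝ)/3) * (2:ℝ) ^ (-(2*((m+j:ℕ):ℝ))/3)) := by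
    rw [← Finset.Ico_add_one_right_eq_Icc, Finset.sum_Ico_eq_sum_range,
      show m + d + 1 - m = d + 1 from by omega]
  rw [step1]
  have step2 : ∑ j ∈ range (d+1), (((m+j:ℕ):ℝ) ^ ((1:ℝ)/3) * (2:ℝ) ^ (-(2*((m+j:ℕ):ℝ))/3))
      ≤ ∑ j ∈ range (d+1), H * r ^ j :=
    Finset.sum_le_sum (fun j _ => hterm m j hm)
  have step3 : ∑ j ∈ range (d+1), H * r ^ j = H * ∑ j ∈ range (d+1), r ^ j := by
    rw [Finset.mul_sum]
  have step4 : ∑ j ∈ range (d+1), r ^ j ≤ 5 := by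
    have := geom_sum_eq (ne_of_lt hr1) (d+1)
    rw [this]
    have h1 : 0 ≤ 1 - r ^ (d+1) := by
      have : r ^ (d+1) ≤ 1 := pow_le_one₀ hr0 (le_of_lt hr1)
      linarith
    have h2 : (0:ℝ) < 1 - r := by linarith
    rw [div_le_iff_of_neg (by linarith : r - 1 < 0)]
    have h3 : (0:ℝ) ≤ r ^ (d+1) := pow_nonneg hr0 _
    linarith
  calc _ ≤ H * ∑ j ∈ range (d+1), r ^ j := by rw [← step3]; exact step2
    _ ≤ H * 5 := mul_le_mul_of_nonneg_left step4 hH0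
    _ = 5 * H := by ring

lemma exists_scale (x : ℝ) (h0 : 0 < x) (h1 : x ≤ 1) :
    ∃ n : ℕ, x ≤ (2:ℝ)^(-(n:ℝ)) ∧ (2:ℝ)^(-((n:ℝ)+1)) < x := by
  have hhalf : ∀ p : ℕ, (2:ℝ)^(-(p:ℝ)) = (1/2)^p := by
    intro p
    rw [Real.rpow_neg (by norm_num), Real.rpow_natCast]
    simp [div_pow]
  obtain ⟨p, hp⟩ := exists_pow_lt_of_lt_one h0 (by norm_num : (1:ℝ)/2 < 1)
  have hQp : (2:ℝ)^(-(p:ℝ)) < x := by rw [hhalf]; exact hp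
  have hex : ∃ q : ℕ, (2:ℝ)^(-(q:ℝ)) < x := ⟨p, hQp⟩
  classical
  have hspec := Nat.find_spec hex
  have hne : Nat.find hex ≠ 0 := by
    intro h
    rw [h] at hspec
    norm_num at hspec
    linarith
  obtain ⟨n, hn⟩ : ∃ n, Nat.find hex = n + 1 := ⟨Nat.find hex - 1, by omega⟩
  rw [hn] at hspec
  have hmin : ¬ ((2:ℝ)^(-(n:ℝ)) < x) := Nat.find_min hex (by omega)
  refine ⟨n, by linarith [not_lt.mp hmin], ?_⟩
  convert hspec using 2
  push_cast
  ring
lemma core_est (c₀ : ℝ) (hc₀ : 0 < c₀) (m₀ : ℕ) (f : ℝ → ℝ)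
    (hf : ∀ m : ℕ, m₀ ≤ m → ∀ j : ℕ, j < 2 ^ m →
      |f (((j : ℝ) + 1) / 2 ^ m) - f ((j : ℝ) / 2 ^ m)| ≤
        c₀ * (2:ℝ) ^ (-(2 * (m : ℝ)) / 3) * (Real.log (2 ^ m)) ^ ((1:ℝ)/3))
    (m : ℕ) (hm : m₀ ≤ m) (hm1 : 1 ≤ m)
    (s t : ℝ) (hs : ∃ (i : ℕ) (z : ℤ), s = (z : ℝ) / 2 ^ i)
    (ht : ∃ (i : ℕ) (z : ℤ), t = (z : ℝ) / 2 ^ i)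
    (hs0 : 0 ≤ s) (hst : s ≤ t) (ht1 : t ≤ 1)
    (hgap : t - s ≤ (2:ℝ) ^ (-(m:ℝ))) :
    |f t - f s| ≤ 10 * c₀ * (Real.log 2) ^ ((1:ℝ)/3) *
      ((m:ℝ) ^ ((1:ℝ)/3) * (2:ℝ) ^ (-(2*(m:ℝ))/3)) := by
  obtain ⟨i, z, hz⟩ := hs
  obtain ⟨i', w, hw⟩ := ht
  have h2i : (0:ℝ) < 2 ^ i := by positivity
  have h2i' : (0:ℝ) < 2 ^ i' := by positivity
  have hz0 : 0 ≤ z := by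
    by_contra h
    push_neg at h
    have : s < 0 := by
      rw [hz]
      apply div_neg_of_neg_of_pos _ h2i
      exact_mod_cast h
    linarith
  have hw0 : 0 ≤ w := by
    by_contra h
    push_neg at h
    have : t < 0 := by
      rw [hw]
      apply div_neg_of_neg_of_pos _ h2i'
      exact_mod_cast h
    linarith
  set N := max (max i i') m with hN
  have hiN : i ≤ N := le_trans (le_max_left i i') (le_max_left _ _)
  have hi'N : i' ≤ N := le_trans (le_max_right i i') (le_max_left _ _)
  have hmN : m ≤ N := le_max_right _ _
  obtain ⟨d, hd⟩ : ∃ d, N = m + d := ⟨N - m, by omega⟩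
  set a : ℕ := z.toNat * 2^(N-i) with ha
  set b : ℕ := w.toNat * 2^(N-i') with hb
  have h2N : (0:ℝ) < 2 ^ N := by positivity
  have hsa : (a:ℝ)/2^N = s := by
    rw [ha, hz]
    have hzc : ((z.toNat:ℕ):ℝ) = (z:ℝ) := by exact_mod_cast Int.toNat_of_nonneg hz0
    push_cast
    rw [hzc]
    have hpow : (2:ℝ)^N = 2^(N-i) * 2^i := by
      rw [← pow_add]
      congr 1
      omega
    rw [hpow]
    field_simp
  have htb : (b:ℝ)/2^N = t := by
    rw [hb, hw]
    have hwc : ((w.toNat:ℕ):ℝ) = (w:ℝ) := by exact_mod_cast Int.toNat_of_nonneg hw0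
    push_cast
    rw [hwc]
    have hpow : (2:ℝ)^N = 2^(N-i') * 2^i' := by
      rw [← pow_add]
      congr 1
      omega
    rw [hpow]
    field_simp
  -- side conditions
  have hab : a ≤ b := by
    have : (a:ℝ)/2^N ≤ (b:ℝ)/2^N := by rw [hsa, htb]; exact hst
    have := (div_le_div_iff_of_pos_right h2N).mp this
    exact_mod_cast this
  have hb2 : b ≤ 2^N := by
    have h1 : (b:ℝ)/2^N ≤ 1 := by rw [htb]; exact ht1
    have hb' : (b:ℝ) ≤ 2^N := (div_le_one h2N).mp h1
    exact_mod_cast hb'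
  have hba : b ≤ a + 2^d := by
    have hkey : (2:ℝ)^(-(m:ℝ)) * 2^N = 2^d := by
      rw [Real.rpow_neg (by norm_num), Real.rpow_natCast]
      have : (2:ℝ)^N = 2^m * 2^d := by
        rw [hd, pow_add]
      rw [this]
      field_simp
    have h1 : (b:ℝ) - a ≤ 2^d := by
      have h2 : ((b:ℝ) - a)/2^N = t - s := by
        rw [sub_div, hsa, htb]
      have h3 : (b:ℝ) - a = (t - s) * 2^N := by
        rw [← h2]; field_simp
      rw [h3, ← hkey]
      exact mul_le_mul_of_nonneg_right hgap (le_of_lt h2N)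
    have h4 : (b:ℝ) ≤ (a:ℝ) + (2^d : ℕ) := by push_cast; linarith
    exact_mod_cast h4
  -- apply chaining
  set g : ℕ → ℝ := fun k => c₀ * (2:ℝ) ^ (-(2 * (k : ℝ)) / 3) * (Real.log (2 ^ k)) ^ ((1:ℝ)/3)
    with hg
  have hg0 : ∀ k, 0 ≤ g k := by
    intro k
    rw [hg]
    have : (0:ℝ) ≤ Real.log (2^k) := by
      apply Real.log_nonneg
      exact_mod_cast Nat.one_le_two_pow
    positivity
  rw [hd] at hsa htb hb2
  have hchain := chain_aux f g hg0 m₀ m hm hf d a b hab hb2 hba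
  rw [hsa, htb] at hchain
  -- rewrite g
  have hgk : ∀ k : ℕ, 2 * g k = 2 * c₀ * (Real.log 2) ^ ((1:ℝ)/3) *
      ((k:ℝ) ^ ((1:ℝ)/3) * (2:ℝ) ^ (-(2*(k:ℝ))/3)) := by
    intro k
    simp only [hg]
    have hlog : Real.log ((2:ℝ)^k) = (k:ℝ) * Real.log 2 := by
      rw [Real.log_pow]
    rw [hlog, Real.mul_rpow (by positivity) (Real.log_nonneg (by norm_num))]
    ring
  have hsum' : ∑ k ∈ Icc m (m+d), 2 * g k ≤
      10 * c₀ * (Real.log 2) ^ ((1:ℝ)/3) * ((m:ℝ) ^ ((1:ℝ)/3) * (2:ℝ) ^ (-(2*(m:ℝ))/3)) := by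
    calc ∑ k ∈ Icc m (m+d), 2 * g k
        = ∑ k ∈ Icc m (m+d), 2 * c₀ * (Real.log 2) ^ ((1:ℝ)/3) *
            ((k:ℝ) ^ ((1:ℝ)/3) * (2:ℝ) ^ (-(2*(k:ℝ))/3)) :=
          Finset.sum_congr rfl (fun k _ => hgk k)
      _ = 2 * c₀ * (Real.log 2) ^ ((1:ℝ)/3) *
            ∑ k ∈ Icc m (m+d), ((k:ℝ) ^ ((1:ℝ)/3) * (2:ℝ) ^ (-(2*(k:ℝ))/3)) := by
          rw [Finset.mul_sum]
      _ ≤ 2 * c₀ * (Real.log 2) ^ ((1:ℝ)/3) *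
            (5 * ((m:ℝ) ^ ((1:ℝ)/3) * (2:ℝ) ^ (-(2*(m:ℝ))/3))) := by
          apply mul_le_mul_of_nonneg_left (hsum m d hm1)
          positivity
      _ = 10 * c₀ * (Real.log 2) ^ ((1:ℝ)/3) *
            ((m:ℝ) ^ ((1:ℝ)/3) * (2:ℝ) ^ (-(2*(m:ℝ))/3)) := by ring
  linarith
lemma near_est (c₀ : ℝ) (hc₀ : 0 < c₀) (f : ℝ → ℝ)
    (hf : ∀ m : ℕ, ∀ j : ℕ, j < 2 ^ m →
      |f (((j : ℝ) + 1) / 2 ^ m) - f ((j : ℝ) / 2 ^ m)| ≤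
        c₀ * (2:ℝ) ^ (-(2 * (m : ℝ)) / 3) * (Real.log (2 ^ m)) ^ ((1:ℝ)/3))
    (x y : ℝ) (hx : ∃ (i : ℕ) (z : ℤ), x = (z : ℝ) / 2 ^ i)
    (hy : ∃ (i : ℕ) (z : ℤ), y = (z : ℝ) / 2 ^ i)
    (hx0 : 0 ≤ x) (hxy : x ≤ y) (hy1 : y ≤ 1)
    (hpos : 0 < y - x) (hhalf : y - x ≤ 1/2) :
    |f y - f x| ≤ 20 * c₀ * (y - x) ^ ((1:ℝ)/3) := by
  set u := y - x with hu
  have hu1 : u ≤ 1 := by linarith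
  obtain ⟨n, hn1, hn2⟩ := exists_scale u hpos hu1
  have hn : 1 ≤ n := by
    by_contra h
    push_neg at h
    interval_cases n
    · have e : (2:ℝ) ^ (-(((0:ℕ):ℝ) + 1)) = 1/2 := by
        norm_num
      rw [e] at hn2
      linarith
  have hcore := core_est c₀ hc₀ 0 f (fun m _ j hj => hf m j hj) n (Nat.zero_le n) hn
    x y hx hy hx0 hxy hy1 hn1
  -- now estimate the RHS of hcore
  have hu0 : 0 < u := hpos
  have hlogu : (0:ℝ) ≤ Real.log u⁻¹ := by
    apply Real.log_nonneg
    rw [le_inv_comm₀ (by norm_num) hu0]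
    linarith
  have hB : (Real.log 2) ^ ((1:ℝ)/3) * (n:ℝ) ^ ((1:ℝ)/3) ≤ (Real.log u⁻¹) ^ ((1:ℝ)/3) := by
    rw [← Real.mul_rpow (Real.log_nonneg (by norm_num)) (by positivity)]
    apply Real.rpow_le_rpow (by positivity) _ (by norm_num)
    have h2n : ((2:ℝ)^(n:ℕ)) ≤ u⁻¹ := by
      have h1 : ((2:ℝ)^(-(n:ℝ)))⁻¹ ≤ u⁻¹ := by
        apply inv_anti₀ hu0 hn1
      have e : ((2:ℝ)^(-(n:ℝ)))⁻¹ = (2:ℝ)^(n:ℕ) := by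
        rw [Real.rpow_neg (by norm_num), inv_inv, Real.rpow_natCast]
      rwa [e] at h1
    have := Real.log_le_log (by positivity) h2n
    rw [Real.log_pow] at this
    calc Real.log 2 * (n:ℝ) = (n:ℝ) * Real.log 2 := by ring
      _ ≤ Real.log u⁻¹ := this
  have hA : (2:ℝ) ^ (-(2*(n:ℝ))/3) ≤ (2*u) ^ ((2:ℝ)/3) := by
    have h1 : (2:ℝ) ^ (-(n:ℝ)) ≤ 2*u := by
      have : (2:ℝ) ^ (-((n:ℝ)+1)) * 2 = 2 ^ (-(n:ℝ)) := by
        rw [← Real.rpow_add_one (by norm_num)]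
        ring_nf
      nlinarith [hn2]
    calc (2:ℝ) ^ (-(2*(n:ℝ))/3) = ((2:ℝ) ^ (-(n:ℝ))) ^ ((2:ℝ)/3) := by
          rw [← Real.rpow_mul (by norm_num)]
          ring_nf
      _ ≤ (2*u) ^ ((2:ℝ)/3) := Real.rpow_le_rpow (by positivity) h1 (by norm_num)
  have hfinal : 10 * c₀ * (Real.log 2) ^ ((1:ℝ)/3) *
      ((n:ℝ) ^ ((1:ℝ)/3) * (2:ℝ) ^ (-(2*(n:ℝ))/3)) ≤ 20 * c₀ * u ^ ((1:ℝ)/3) := by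
    have step1 : 10 * c₀ * (Real.log 2) ^ ((1:ℝ)/3) *
        ((n:ℝ) ^ ((1:ℝ)/3) * (2:ℝ) ^ (-(2*(n:ℝ))/3))
        ≤ 10 * c₀ * ((Real.log u⁻¹) ^ ((1:ℝ)/3) * (2*u) ^ ((2:ℝ)/3)) := by
      have e : 10 * c₀ * (Real.log 2) ^ ((1:ℝ)/3) *
          ((n:ℝ) ^ ((1:ℝ)/3) * (2:ℝ) ^ (-(2*(n:ℝ))/3))
          = 10 * c₀ * (((Real.log 2) ^ ((1:ℝ)/3) * (n:ℝ) ^ ((1:ℝ)/3)) *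
            (2:ℝ) ^ (-(2*(n:ℝ))/3)) := by ring
      rw [e]
      apply mul_le_mul_of_nonneg_left _ (by positivity)
      apply mul_le_mul hB hA (by positivity) (by positivity)
    have step2 : (2*u) ^ ((2:ℝ)/3) ≤ 2 * u ^ ((2:ℝ)/3) := by
      rw [Real.mul_rpow (by norm_num) (le_of_lt hu0)]
      have : (2:ℝ) ^ ((2:ℝ)/3) ≤ 2 := by
        have h := Real.rpow_le_rpow_of_exponent_le (by norm_num : (1:ℝ) ≤ 2)
          (by norm_num : (2:ℝ)/3 ≤ 1)
        rwa [Real.rpow_one] at h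
      nlinarith [Real.rpow_nonneg (le_of_lt hu0) ((2:ℝ)/3)]
    have step3 : u ^ ((2:ℝ)/3) * (Real.log u⁻¹) ^ ((1:ℝ)/3) ≤ u ^ ((1:ℝ)/3) := by
      have e1 : u ^ ((2:ℝ)/3) = (u^(2:ℕ)) ^ ((1:ℝ)/3) := by
        rw [← Real.rpow_natCast u 2, ← Real.rpow_mul (le_of_lt hu0)]
        norm_num
      rw [e1, ← Real.mul_rpow (by positivity) hlogu]
      apply Real.rpow_le_rpow (by positivity) _ (by norm_num)
      have hloginv : Real.log u⁻¹ ≤ u⁻¹ := by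
        have := Real.log_le_sub_one_of_pos (inv_pos.mpr hu0)
        linarith
      calc u^(2:ℕ) * Real.log u⁻¹ ≤ u^(2:ℕ) * u⁻¹ :=
            mul_le_mul_of_nonneg_left hloginv (by positivity)
        _ = u := by field_simp
    calc 10 * c₀ * (Real.log 2) ^ ((1:ℝ)/3) *
        ((n:ℝ) ^ ((1:ℝ)/3) * (2:ℝ) ^ (-(2*(n:ℝ))/3))
        ≤ 10 * c₀ * ((Real.log u⁻¹) ^ ((1:ℝ)/3) * (2*u) ^ ((2:ℝ)/3)) := step1
      _ ≤ 10 * c₀ * ((Real.log u⁻¹) ^ ((1:ℝ)/3) * (2 * u ^ ((2:ℝ)/3))) := by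
          apply mul_le_mul_of_nonneg_left _ (by positivity)
          exact mul_le_mul_of_nonneg_left step2 (by positivity)
      _ = 20 * c₀ * (u ^ ((2:ℝ)/3) * (Real.log u⁻¹) ^ ((1:ℝ)/3)) := by ring
      _ ≤ 20 * c₀ * u ^ ((1:ℝ)/3) := mul_le_mul_of_nonneg_left step3 (by positivity)
  linarith
/-- Chaining step: dyadic-grid increment bounds yield a modulus of continuity of
order `(t-s)^{2/3} (log (t-s)⁻¹)^{1/3}` on dyadic pairs. -/
theorem stmt_9 (c₀ : ℝ) (hc₀ : 0 < c₀) :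
    ∃ C : ℝ, 0 < C ∧ ∀ (m₀ : ℕ) (f : ℝ → ℝ),
      (∀ m : ℕ, m₀ ≤ m → ∀ j : ℕ, j < 2 ^ m →
        |f (((j : ℝ) + 1) / 2 ^ m) - f ((j : ℝ) / 2 ^ m)| ≤
          c₀ * (2:ℝ) ^ (-(2 * (m : ℝ)) / 3) * (Real.log (2 ^ m)) ^ ((1:ℝ)/3)) →
      ∀ s t : ℝ, (∃ (i : ℕ) (z : ℤ), s = (z : ℝ) / 2 ^ i) →
        (∃ (i : ℕ) (z : ℤ), t = (z : ℝ) / 2 ^ i) →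
        s ∈ Set.Icc (0:ℝ) 1 → t ∈ Set.Icc (0:ℝ) 1 →
        0 < t - s → t - s ≤ (2:ℝ) ^ (-(m₀ : ℝ)) →
        |f t - f s| ≤ C * (t - s) ^ ((2:ℝ)/3) * (Real.log (t - s)⁻¹) ^ ((1:ℝ)/3) := by
  refine ⟨100 * c₀, by positivity, ?_⟩
  intro m₀ f hf s t hs ht hs01 ht01 hst hstle
  obtain ⟨hs0, hs1⟩ := hs01
  obtain ⟨ht0, ht1⟩ := ht01
  set u := t - s with hu
  have hu0 : 0 < u := hst
  have hu1 : u ≤ 1 := by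
    calc u ≤ (2:ℝ) ^ (-(m₀:ℝ)) := hstle
    _ ≤ (2:ℝ) ^ (0:ℝ) := Real.rpow_le_rpow_of_exponent_le (by norm_num)
        (neg_nonpos.mpr (by positivity))
    _ = 1 := Real.rpow_zero 2
  obtain ⟨m, hm1, hm2⟩ := exists_scale u hu0 hu1
  -- m ≥ m₀
  have hmm₀ : m₀ ≤ m := by
    by_contra h
    push_neg at h
    have h1 : (2:ℝ) ^ (-((m:ℝ)+1)) < 2 ^ (-(m₀:ℝ)) := lt_of_lt_of_le hm2 hstle
    have h2 : -((m:ℝ)+1) < -(m₀:ℝ) :=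
      (Real.rpow_lt_rpow_left_iff (by norm_num : (1:ℝ) < 2)).mp h1
    have : (m₀:ℝ) < (m:ℝ) + 1 := by linarith
    have : m₀ < m + 1 := by exact_mod_cast this
    omega
  rcases Nat.eq_zero_or_pos m with hm0 | hmpos
  · -- m = 0 : 1/2 < u ≤ 1 and m₀ = 0
    subst hm0
    have hm₀0 : m₀ = 0 := by omega
    subst hm₀0
    have hu12 : 1/2 < u := by
      have e : (2:ℝ) ^ (-(((0:ℕ):ℝ) + 1)) = 1/2 := by norm_num
      rw [e] at hm2
      exact hm2
    -- f 1 = f 0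
    have hf10 : f 1 - f 0 = 0 := by
      have := hf 0 (le_refl 0) 0 (by norm_num)
      norm_num at this
      exact this
    rcases eq_or_lt_of_le hu1 with hueq | hult
    · -- u = 1 : s = 0, t = 1, RHS = 0
      have hs0' : s = 0 := by rw [hu] at hueq; linarith
      have ht1' : t = 1 := by rw [hu] at hueq; linarith
      rw [hueq, hs0', ht1', hf10]
      simp [Real.log_one, Real.zero_rpow (by norm_num : (1:ℝ)/3 ≠ 0)]
    · -- 1/2 < u < 1
      set ε := 1 - u with hε
      have hε0 : 0 < ε := by rw [hε]; linarith
      have hε12 : ε < 1/2 := by rw [hε]; linarith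
      have hsε : s ≤ ε := by rw [hε, hu]; linarith
      have htε : 1 - t ≤ ε := by rw [hε, hu]; linarith
      have hf' : ∀ m : ℕ, ∀ j : ℕ, j < 2 ^ m →
          |f (((j : ℝ) + 1) / 2 ^ m) - f ((j : ℝ) / 2 ^ m)| ≤
            c₀ * (2:ℝ) ^ (-(2 * (m : ℝ)) / 3) * (Real.log (2 ^ m)) ^ ((1:ℝ)/3) :=
        fun m j hj => hf m (Nat.zero_le m) j hj
      have hd0 : ∃ (i : ℕ) (z : ℤ), (0:ℝ) = (z : ℝ) / 2 ^ i := ⟨0, 0, by norm_num⟩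
      have hd1 : ∃ (i : ℕ) (z : ℤ), (1:ℝ) = (z : ℝ) / 2 ^ i := ⟨0, 1, by norm_num⟩
      have hbs : |f s - f 0| ≤ 20 * c₀ * ε ^ ((1:ℝ)/3) := by
        rcases eq_or_lt_of_le hs0 with h | h
        · rw [← h]
          simp
          positivity
        · have := near_est c₀ hc₀ f hf' 0 s hd0 hs (le_refl 0) (le_of_lt h) hs1
            (by linarith) (by linarith)
          simp only [sub_zero] at this
          calc |f s - f 0| ≤ 20 * c₀ * s ^ ((1:ℝ)/3) := this
            _ ≤ 20 * c₀ * ε ^ ((1:ℝ)/3) := by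
                apply mul_le_mul_of_nonneg_left _ (by positivity)
                exact Real.rpow_le_rpow (le_of_lt h) hsε (by norm_num)
      have hbt : |f 1 - f t| ≤ 20 * c₀ * ε ^ ((1:ℝ)/3) := by
        rcases eq_or_lt_of_le ht1 with h | h
        · rw [h]
          simp
          positivity
        · have := near_est c₀ hc₀ f hf' t 1 ht hd1 ht0 (le_of_lt h) (le_refl 1)
            (by linarith) (by linarith)
          calc |f 1 - f t| ≤ 20 * c₀ * (1 - t) ^ ((1:ℝ)/3) := this
            _ ≤ 20 * c₀ * ε ^ ((1:ℝ)/3) := by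
                apply mul_le_mul_of_nonneg_left _ (by positivity)
                exact Real.rpow_le_rpow (by linarith) htε (by norm_num)
      have habs10 : |f 1 - f 0| ≤ 0 := by rw [hf10]; simp
      have htri : |f t - f s| ≤ |f 1 - f t| + |f 1 - f 0| + |f s - f 0| := by
        have h1 := abs_sub_le (f t) (f 1) (f s)
        have h2 := abs_sub_le (f 1) (f 0) (f s)
        have e1 : |f t - f 1| = |f 1 - f t| := abs_sub_comm _ _
        have e2 : |f 0 - f s| = |f s - f 0| := abs_sub_comm _ _
        linarith [abs_sub_le (f t) (f 1) (f s), abs_sub_le (f 1) (f 0) (f s),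
          abs_sub_comm (f t) (f 1), abs_sub_comm (f 0) (f s)]
      have hLHS : |f t - f s| ≤ 40 * c₀ * ε ^ ((1:ℝ)/3) := by linarith
      -- RHS lower bound
      have hA : (1:ℝ)/2 ≤ u ^ ((2:ℝ)/3) := by
        have h1 : u ^ (1:ℝ) ≤ u ^ ((2:ℝ)/3) :=
          Real.rpow_le_rpow_of_exponent_ge hu0 hu1 (by norm_num)
        rw [Real.rpow_one] at h1
        linarith
      have hB : ε ^ ((1:ℝ)/3) ≤ (Real.log u⁻¹) ^ ((1:ℝ)/3) := by
        apply Real.rpow_le_rpow (le_of_lt hε0) _ (by norm_num)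
        have h1 : Real.log u ≤ u - 1 := Real.log_le_sub_one_of_pos hu0
        rw [Real.log_inv]
        rw [hε]
        linarith
      calc |f t - f s| ≤ 40 * c₀ * ε ^ ((1:ℝ)/3) := hLHS
        _ ≤ 100 * c₀ * ((1/2) * (Real.log u⁻¹) ^ ((1:ℝ)/3)) := by
            nlinarith [Real.rpow_nonneg (le_of_lt hε0) ((1:ℝ)/3),
              le_trans (Real.rpow_nonneg (le_of_lt hε0) ((1:ℝ)/3)) hB]
        _ ≤ 100 * c₀ * (u ^ ((2:ℝ)/3) * (Real.log u⁻¹) ^ ((1:ℝ)/3)) := by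
            apply mul_le_mul_of_nonneg_left _ (by positivity)
            apply mul_le_mul_of_nonneg_right hA
            exact le_trans (Real.rpow_nonneg (le_of_lt hε0) ((1:ℝ)/3)) hB
        _ = 100 * c₀ * u ^ ((2:ℝ)/3) * (Real.log u⁻¹) ^ ((1:ℝ)/3) := by ring
  · -- m ≥ 1
    have hcore := core_est c₀ hc₀ m₀ f hf m hmm₀ hmpos s t hs ht hs0 (by linarith)
      ht1 hm1
    -- RHS lower bounds
    have hA : (1/2) * (2:ℝ) ^ (-(2*(m:ℝ))/3) ≤ u ^ ((2:ℝ)/3) := by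
      have h1 : ((2:ℝ) ^ (-((m:ℝ)+1))) ^ ((2:ℝ)/3) ≤ u ^ ((2:ℝ)/3) :=
        Real.rpow_le_rpow (by positivity) (le_of_lt hm2) (by norm_num)
      have h2 : ((2:ℝ) ^ (-((m:ℝ)+1))) ^ ((2:ℝ)/3)
          = (2:ℝ) ^ (-(2:ℝ)/3) * (2:ℝ) ^ (-(2*(m:ℝ))/3) := by
        rw [← Real.rpow_mul (by norm_num), ← Real.rpow_add (by norm_num)]
        ring_nf
      have h3 : (1:ℝ)/2 ≤ (2:ℝ) ^ (-(2:ℝ)/3) := by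
        have h4 : (2:ℝ) ^ (-(1:ℝ)) ≤ (2:ℝ) ^ (-(2:ℝ)/3) :=
          Real.rpow_le_rpow_of_exponent_le (by norm_num) (by norm_num)
        have h5 : (2:ℝ) ^ (-(1:ℝ)) = 1/2 := by norm_num
        linarith
      calc (1/2) * (2:ℝ) ^ (-(2*(m:ℝ))/3)
          ≤ (2:ℝ) ^ (-(2:ℝ)/3) * (2:ℝ) ^ (-(2*(m:ℝ))/3) := by
            apply mul_le_mul_of_nonneg_right h3 (by positivity)
        _ = ((2:ℝ) ^ (-((m:ℝ)+1))) ^ ((2:ℝ)/3) := h2.symm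
        _ ≤ u ^ ((2:ℝ)/3) := h1
    have hB : (m:ℝ) ^ ((1:ℝ)/3) * (Real.log 2) ^ ((1:ℝ)/3)
        ≤ (Real.log u⁻¹) ^ ((1:ℝ)/3) := by
      rw [← Real.mul_rpow (by positivity) (Real.log_nonneg (by norm_num))]
      apply Real.rpow_le_rpow (by positivity) _ (by norm_num)
      have h2n : ((2:ℝ)^(m:ℕ)) ≤ u⁻¹ := by
        have h1 : ((2:ℝ)^(-(m:ℝ)))⁻¹ ≤ u⁻¹ := inv_anti₀ hu0 hm1
        have e : ((2:ℝ)^(-(m:ℝ)))⁻¹ = (2:ℝ)^(m:ℕ) := by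
          rw [Real.rpow_neg (by norm_num), inv_inv, Real.rpow_natCast]
        rwa [e] at h1
      have h2 := Real.log_le_log (by positivity) h2n
      rw [Real.log_pow] at h2
      exact_mod_cast h2
    have hrpos1 : (0:ℝ) ≤ (m:ℝ) ^ ((1:ℝ)/3) * (Real.log 2) ^ ((1:ℝ)/3) := by positivity
    have hrpos2 : (0:ℝ) ≤ (1/2) * (2:ℝ) ^ (-(2*(m:ℝ))/3) := by positivity
    calc |f t - f s|
        ≤ 10 * c₀ * (Real.log 2) ^ ((1:ℝ)/3) *
          ((m:ℝ) ^ ((1:ℝ)/3) * (2:ℝ) ^ (-(2*(m:ℝ))/3)) := hcore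
      _ ≤ 100 * c₀ * (((1/2) * (2:ℝ) ^ (-(2*(m:ℝ))/3)) *
            ((m:ℝ) ^ ((1:ℝ)/3) * (Real.log 2) ^ ((1:ℝ)/3))) := by
          nlinarith [Real.rpow_nonneg (by positivity : (0:ℝ) ≤ (m:ℝ)) ((1:ℝ)/3),
            Real.rpow_nonneg (Real.log_nonneg (by norm_num : (1:ℝ) ≤ 2)) ((1:ℝ)/3),
            Real.rpow_nonneg (by norm_num : (0:ℝ) ≤ 2) (-(2*(m:ℝ))/3),
            mul_nonneg (Real.rpow_nonneg (by positivity : (0:ℝ) ≤ (m:ℝ)) ((1:ℝ)/3))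
              (mul_nonneg (Real.rpow_nonneg (Real.log_nonneg (by norm_num : (1:ℝ) ≤ 2)) ((1:ℝ)/3))
                (Real.rpow_nonneg (by norm_num : (0:ℝ) ≤ 2) (-(2*(m:ℝ))/3)))]
      _ ≤ 100 * c₀ * (u ^ ((2:ℝ)/3) * (Real.log u⁻¹) ^ ((1:ℝ)/3)) := by
          apply mul_le_mul_of_nonneg_left _ (by positivity)
          apply mul_le_mul hA hB hrpos1 (by positivity)
      _ = 100 * c₀ * u ^ ((2:ℝ)/3) * (Real.log u⁻¹) ^ ((1:ℝ)/3) := by ring
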